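/- For each positive integer n let X_n = Z_{2n}^{(n+1)} and Y_n = Z_{2n}^{(n-1)} be the Chu sequences of length 2n with parameters n+1 and n−1. Then for every odd integer u with |u| ≤ 2n−1, the aperiodic crosscorrelation satisfies |C_{X_n, Y_n}(u)| = 1. -/

import Mathlib

open Complex Real Filter Topology

noncomputable section

/-- Zero-extension of a (length `n`) sequence to all of `ℤ`: entries outside
`{0, ..., n-1}` are set to `0`. -/
def seqExt (n : ℕ) (A : ℤ → ℂ) : ℤ → ℂ := fun j => if 0 ≤ j ∧ j < (n : ℤ) then A j else 0

/-- Aperiodic crosscorrelation of two sequences of length `n` at shift `u`: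
`C_{A,B}(u) = ∑_{j ∈ ℤ} a_j * conj (b_{j+u})`.  Since the zero-extended entries
vanish outside `{0, ..., n-1}`, the sum over `ℤ` equals the sum over that range. -/
def corr (n : ℕ) (A B : ℤ → ℂ) (u : ℤ) : ℂ :=
  ∑ j ∈ Finset.Icc (0 : ℤ) ((n : ℤ) - 1), seqExt n A j * (starRingEnd ℂ) (seqExt n B (j + u))

/-- Crosscorrelation demerit factor `CDF(A,B)`.  The correlations vanish for
`|u| ≥ n`, so the sum over all `u ∈ ℤ` equals the sum over `-(n-1) ≤ u ≤ n-1`. -/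
def cdf (n : ℕ) (A B : ℤ → ℂ) : ℝ :=
  (∑ u ∈ Finset.Icc (-(n : ℤ) + 1) ((n : ℤ) - 1), ‖corr n A B u‖ ^ 2) /
    (‖corr n A A 0‖ * ‖corr n B B 0‖)

/-- Autocorrelation demerit factor `ADF(A)`. -/
def adf (n : ℕ) (A : ℤ → ℂ) : ℝ :=
  (∑ u ∈ Finset.Icc (-(n : ℤ) + 1) ((n : ℤ) - 1) \ {0}, ‖corr n A A u‖ ^ 2) /
    ‖corr n A A 0‖ ^ 2

/-- Pursley-Sarwate criterion `PSC(A,B)`. -/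
def psc (n : ℕ) (A B : ℤ → ℂ) : ℝ := Real.sqrt (adf n A * adf n B) + cdf n A B

/-- The Chu sequence of length `n` with parameter `a`: `z_j = exp(π i a j² / n)`. -/
def chu (n : ℕ) (a : ℤ) : ℤ → ℂ :=
  fun j => Complex.exp (Real.pi * Complex.I * (a : ℂ) * (j : ℂ) ^ 2 / (n : ℂ))

/-- Generalised Gauss sum `S_N(x, θ) = ∑_{j=1}^N exp(π i x j² + 2 π i θ j)`. -/
def gSum (N : ℕ) (x θ : ℝ) : ℂ :=
  ∑ j ∈ Finset.Icc 1 N,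
    Complex.exp (Real.pi * Complex.I * (x : ℂ) * (j : ℂ) ^ 2 +
      2 * Real.pi * Complex.I * (θ : ℂ) * (j : ℂ))


namespace ChuAux

/-- The basic character `m ↦ exp(π i m / (2n))`. -/
noncomputable def cE (n : ℕ) (m : ℤ) : ℂ :=
  Complex.exp (Real.pi * Complex.I * (m : ℂ) / (2 * (n : ℂ)))

lemma cE_add (n : ℕ) (a b : ℤ) : cE n (a + b) = cE n a * cE n b := by
  unfold cE
  rw [← Complex.exp_add]
  congr 1
  push_cast
  ring

lemma abs_cE (n : ℕ) (m : ℤ) : ‖cE n m‖ = 1 := by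
  have h : cE n m = Complex.exp ((Real.pi * (m : ℝ) / (2 * (n : ℝ)) : ℝ) * Complex.I) := by
    unfold cE
    congr 1
    push_cast
    ring
  rw [h, Complex.norm_exp_ofReal_mul_I]

lemma cE_two_mul (n : ℕ) (hn : n ≠ 0) (m : ℤ) (hm : Odd m) :
    cE n (2 * (n : ℤ) * m) = -1 := by
  have hne : (n : ℂ) ≠ 0 := Nat.cast_ne_zero.mpr hn
  have h : (Real.pi : ℂ) * Complex.I * ((2 * (n : ℤ) * m : ℤ) : ℂ) / (2 * (n : ℂ)) =
      (m : ℤ) * ((Real.pi : ℂ) * Complex.I) := by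
    push_cast
    field_simp
  unfold cE
  rw [h, Complex.exp_int_mul, Complex.exp_pi_mul_I, Odd.neg_one_zpow hm]

lemma corr_eq_pos (m : ℕ) (A B : ℤ → ℂ) (u : ℤ) (h0 : 0 ≤ u) (h1 : u ≤ (m : ℤ) - 1) :
    corr m A B u = ∑ j ∈ Finset.Icc (0 : ℤ) ((m : ℤ) - 1 - u),
      A j * (starRingEnd ℂ) (B (j + u)) := by
  unfold corr
  have hsub : Finset.Icc (0 : ℤ) ((m : ℤ) - 1 - u) ⊆ Finset.Icc (0 : ℤ) ((m : ℤ) - 1) :=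
    Finset.Icc_subset_Icc_right (by omega)
  have hz : ∀ j ∈ Finset.Icc (0 : ℤ) ((m : ℤ) - 1),
      j ∉ Finset.Icc (0 : ℤ) ((m : ℤ) - 1 - u) →
      seqExt m A j * (starRingEnd ℂ) (seqExt m B (j + u)) = 0 := by
    intro j hj hj'
    simp only [Finset.mem_Icc] at hj hj'
    have e2 : seqExt m B (j + u) = 0 := by
      unfold seqExt
      rw [if_neg (by omega)]
    rw [e2, map_zero, mul_zero]
  rw [← Finset.sum_subset hsub hz]
  apply Finset.sum_congr rfl
  intro j hj
  simp only [Finset.mem_Icc] at hj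
  have e1 : seqExt m A j = A j := by
    unfold seqExt; rw [if_pos (by omega)]
  have e2 : seqExt m B (j + u) = B (j + u) := by
    unfold seqExt; rw [if_pos (by omega)]
  rw [e1, e2]

lemma corr_eq_neg (m : ℕ) (A B : ℤ → ℂ) (u : ℤ) (h0 : u ≤ 0) (h1 : -(m : ℤ) + 1 ≤ u) :
    corr m A B u = ∑ j ∈ Finset.Icc (-u) ((m : ℤ) - 1),
      A j * (starRingEnd ℂ) (B (j + u)) := by
  unfold corr
  have hsub : Finset.Icc (-u) ((m : ℤ) - 1) ⊆ Finset.Icc (0 : ℤ) ((m : ℤ) - 1) :=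
    Finset.Icc_subset_Icc_left (by omega)
  have hz : ∀ j ∈ Finset.Icc (0 : ℤ) ((m : ℤ) - 1),
      j ∉ Finset.Icc (-u) ((m : ℤ) - 1) →
      seqExt m A j * (starRingEnd ℂ) (seqExt m B (j + u)) = 0 := by
    intro j hj hj'
    simp only [Finset.mem_Icc] at hj hj'
    have e2 : seqExt m B (j + u) = 0 := by
      unfold seqExt
      rw [if_neg (by omega)]
    rw [e2, map_zero, mul_zero]
  rw [← Finset.sum_subset hsub hz]
  apply Finset.sum_congr rfl
  intro j hj
  simp only [Finset.mem_Icc] at hj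
  have e1 : seqExt m A j = A j := by
    unfold seqExt; rw [if_pos (by omega)]
  have e2 : seqExt m B (j + u) = B (j + u) := by
    unfold seqExt; rw [if_pos (by omega)]
  rw [e1, e2]

end ChuAux

/-- for odd shifts u with |u| <= 2n - 1, the crosscorrelation of
X_n = Z_(2n)^(n+1) and Y_n = Z_(2n)^(n-1) has modulus 1. -/
theorem chu_crosscorrelation_odd_shift (n : ℕ) (hn : 1 ≤ n) (u : ℤ)
    (hodd : Odd u) (hu : |u| ≤ 2 * (n : ℤ) - 1) :
    ‖corr (2 * n) (chu (2 * n) ((n : ℤ) + 1)) (chu (2 * n) ((n : ℤ) - 1)) u‖ = 1 := by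
  classical
  set N : ℤ := (n : ℤ) with hNdef
  have hN : 1 ≤ N := by rw [hNdef]; exact_mod_cast hn
  have habs := abs_le.mp hu
  have hn0 : n ≠ 0 := by omega
  have hne : (n : ℂ) ≠ 0 := Nat.cast_ne_zero.mpr hn0
  -- each term of the correlation sum
  have hterm : ∀ j : ℤ, chu (2 * n) (N + 1) j * (starRingEnd ℂ) (chu (2 * n) (N - 1) (j + u)) =
      ChuAux.cE n (-((N - 1) * u ^ 2)) * ChuAux.cE n (2 * (j ^ 2 - (N - 1) * u * j)) := by
    intro j
    rw [← ChuAux.cE_add]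
    unfold chu ChuAux.cE
    rw [← Complex.exp_conj, ← Complex.exp_add]
    congr 1
    simp only [map_div₀, map_mul, map_pow, Complex.conj_ofReal, Complex.conj_I,
      map_intCast, map_natCast]
    push_cast
    field_simp
    ring
  -- the key reflection identity
  have hrefl : ∀ j : ℤ, ChuAux.cE n (2 * ((2 * N - u - j) ^ 2 - (N - 1) * u * (2 * N - u - j))) =
      - ChuAux.cE n (2 * (j ^ 2 - (N - 1) * u * j)) := by
    intro j
    have key : 2 * ((2 * N - u - j) ^ 2 - (N - 1) * u * (2 * N - u - j)) =
        2 * (j ^ 2 - (N - 1) * u * j) +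
          2 * N * (u ^ 2 + 2 * (2 * N - u - 2 * j - N * u + u * j)) := by ring
    have hoddm : Odd (u ^ 2 + 2 * (2 * N - u - 2 * j - N * u + u * j)) :=
      (hodd.pow).add_even (even_two_mul _)
    rw [key, ChuAux.cE_add, ChuAux.cE_two_mul n hn0 _ hoddm, mul_neg_one]
  rcases le_or_gt 0 u with hpos | hneg
  · -- positive shift
    rw [ChuAux.corr_eq_pos (2 * n) _ _ u hpos (by push_cast; omega)]
    have hc : ((2 * n : ℕ) : ℤ) - 1 - u = 2 * N - 1 - u := by push_cast; ring
    rw [hc]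
    simp_rw [hterm]
    rw [← Finset.mul_sum]
    have hsplit : Finset.Icc (0 : ℤ) (2 * N - 1 - u) =
        insert 0 (Finset.Icc (1 : ℤ) (2 * N - 1 - u)) := by
      ext x
      simp only [Finset.mem_insert, Finset.mem_Icc]
      omega
    rw [hsplit, Finset.sum_insert (by simp)]
    have hzero : ∑ j ∈ Finset.Icc (1 : ℤ) (2 * N - 1 - u),
        ChuAux.cE n (2 * (j ^ 2 - (N - 1) * u * j)) = 0 := by
      apply Finset.sum_involution (fun j _ => 2 * N - u - j)
      · intro a _
        rw [hrefl a]
        ring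
      · intro a _ _
        obtain ⟨k, hk⟩ := hodd
        omega
      · intro a ha
        simp only [Finset.mem_Icc] at ha ⊢
        omega
      · intro a _
        omega
    have hF0 : ChuAux.cE n (2 * ((0 : ℤ) ^ 2 - (N - 1) * u * 0)) = 1 := by
      have h0 : (2 * ((0 : ℤ) ^ 2 - (N - 1) * u * 0)) = 0 := by ring
      rw [h0]
      simp [ChuAux.cE]
    rw [hzero, add_zero, hF0, mul_one]
    exact ChuAux.abs_cE n _
  · -- negative shift
    have hu1 : u ≤ -1 := by omega
    rw [ChuAux.corr_eq_neg (2 * n) _ _ u (by omega) (by push_cast; omega)]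
    have hc : ((2 * n : ℕ) : ℤ) - 1 = 2 * N - 1 := by push_cast; ring
    rw [hc]
    simp_rw [hterm]
    rw [← Finset.mul_sum]
    have hsplit : Finset.Icc (-u) (2 * N - 1) =
        insert (-u) (Finset.Icc (-u + 1) (2 * N - 1)) := by
      ext x
      simp only [Finset.mem_insert, Finset.mem_Icc]
      omega
    rw [hsplit, Finset.sum_insert (by simp)]
    have hzero : ∑ j ∈ Finset.Icc (-u + 1) (2 * N - 1),
        ChuAux.cE n (2 * (j ^ 2 - (N - 1) * u * j)) = 0 := by
      apply Finset.sum_involution (fun j _ => 2 * N - u - j)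
      · intro a _
        rw [hrefl a]
        ring
      · intro a _ _
        obtain ⟨k, hk⟩ := hodd
        omega
      · intro a ha
        simp only [Finset.mem_Icc] at ha ⊢
        omega
      · intro a _
        omega
    have hFu : ChuAux.cE n (2 * ((-u) ^ 2 - (N - 1) * u * (-u))) = -1 := by
      have h0 : (2 * ((-u) ^ 2 - (N - 1) * u * (-u))) = 2 * N * u ^ 2 := by ring
      rw [h0]
      exact ChuAux.cE_two_mul n hn0 _ hodd.pow
    rw [hzero, add_zero, hFu, mul_neg_one, norm_neg]
    exact ChuAux.abs_cE n _
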